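/- arXiv:1703.02770 — 2 statements merged into one kernel-verified Lean document; each statement's English description precedes it below -/
import Mathlib

section
/- Let (Z, R) → (T, t) be an abstract smoothing of a finite k-scheme R and let η be the generic point of T. Let T' be an irreducible k-scheme with a morphism f : T' → T such that η lies in the set-theoretic image of f and there exists a k-rational point t' of T' with f ∘ t' = t as morphisms Spec k → T. Then the base change Z ×_T T' → T' is an abstract smoothing of R, with special point t'. -/
open AlgebraicGeometry CategoryTheory CategoryTheory.Limits

noncomputable section

universe u

/-- `Spec k` as a scheme. -/
abbrev SpecOf (k : Type u) [CommRing k] : Scheme.{u} := Spec (CommRingCat.of k)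

/-- A morphism of schemes is flat if all induced maps on stalks are flat ring maps. -/
def SchemeHomFlat {X Y : Scheme.{u}} (f : X ⟶ Y) : Prop :=
  ∀ x : X, letI := (f.stalkMap x).hom.toAlgebra
    Module.Flat (Y.presheaf.stalk (f.base x)) (X.presheaf.stalk x)

/-- An abstract smoothing of a scheme `R` over a base scheme `S` (typically `S = Spec k`
for a field `k`; then `pt` is precisely a `k`-rational point of the irreducible,
separated, locally Noetherian base `T`, the family `π : Z ⟶ T` is finite and flat,
its fibre over `pt` is identified with `R` as a `k`-scheme, and its fibre over the
generic point `η` of `T` is smooth over the residue field `κ(η)`). -/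
structure AbstractSmoothing (S : Scheme.{u}) {R : Scheme.{u}} (sR : R ⟶ S) : Type (u + 1) where
  T : Scheme.{u}
  Z : Scheme.{u}
  sT : T ⟶ S
  irr : IrreducibleSpace T
  locNoeth : IsLocallyNoetherian T
  sep : IsSeparated sT
  π : Z ⟶ T
  flat : SchemeHomFlat π
  finite : IsFinite π
  pt : S ⟶ T
  pt_section : pt ≫ sT = 𝟙 S
  fiberIso : pullback π pt ≅ R
  fiberIso_over : fiberIso.inv ≫ pullback.snd π pt = sR
  genericSmooth : ∀ η : T, closure ({η} : Set T) = Set.univ →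
    IsSmooth (pullback.snd π (T.fromSpecResidueField η))

/-- A scheme `R`, given with its structure morphism `sR` to `S = Spec k`, is abstractly
smoothable over `k` if it admits an abstract smoothing. -/
def IsAbstractlySmoothable (S : Scheme.{u}) {R : Scheme.{u}} (sR : R ⟶ S) : Prop :=
  Nonempty (AbstractSmoothing S sR)

/-- An embedded smoothing of a closed subscheme `ι : R ⟶ X` inside `X`, over the base
`S = Spec k`: a closed subscheme `Z ⊆ X ×ₖ T` such that the projection `Z ⟶ T` is an
abstract smoothing of `R`, the fibre over the `k`-rational point `pt` being identified
with `R` compatibly with the embeddings into `X`. -/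
structure EmbeddedSmoothing (S : Scheme.{u}) {R X : Scheme.{u}} (sX : X ⟶ S) (ι : R ⟶ X) :
    Type (u + 1) where
  T : Scheme.{u}
  sT : T ⟶ S
  irr : IrreducibleSpace T
  locNoeth : IsLocallyNoetherian T
  sep : IsSeparated sT
  Z : Scheme.{u}
  ζ : Z ⟶ pullback sX sT
  closedImm : IsClosedImmersion ζ
  flat : SchemeHomFlat (ζ ≫ pullback.snd sX sT)
  finite : IsFinite (ζ ≫ pullback.snd sX sT)
  pt : S ⟶ T
  pt_section : pt ≫ sT = 𝟙 S
  fiberIso : pullback (ζ ≫ pullback.snd sX sT) pt ≅ R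
  fiberIso_comm : fiberIso.hom ≫ ι =
    pullback.fst (ζ ≫ pullback.snd sX sT) pt ≫ ζ ≫ pullback.fst sX sT
  genericSmooth : ∀ η : T, closure ({η} : Set T) = Set.univ →
    IsSmooth (pullback.snd (ζ ≫ pullback.snd sX sT) (T.fromSpecResidueField η))

/-- `R` is smoothable inside `X` (embedded smoothable). -/
def IsEmbeddedSmoothable (S : Scheme.{u}) {R X : Scheme.{u}} (sX : X ⟶ S) (ι : R ⟶ X) : Prop :=
  Nonempty (EmbeddedSmoothing S sX ι)

/-! ### Auxiliary ring-theoretic lemmas on flatness -/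

/-- A ring hom is flat if the target is flat as a module via it. -/
def RingHomFlat {R S : Type*} [CommRing R] [CommRing S] (φ : R →+* S) : Prop :=
  letI := φ.toAlgebra
  Module.Flat R S

lemma RingHomFlat.comp {R S T : Type*} [CommRing R] [CommRing S] [CommRing T]
    {φ : R →+* S} {ψ : S →+* T} (hφ : RingHomFlat φ) (hψ : RingHomFlat ψ) :
    RingHomFlat (ψ.comp φ) := by
  letI := φ.toAlgebra
  letI := ψ.toAlgebra
  letI := (ψ.comp φ).toAlgebra
  haveI : IsScalarTower R S T := IsScalarTower.of_algebraMap_eq' rfl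
  haveI : Module.Flat R S := hφ
  haveI : Module.Flat S T := hψ
  exact Module.Flat.trans R S T

lemma RingHomFlat.of_bijective {R S : Type*} [CommRing R] [CommRing S]
    {φ : R →+* S} (h : Function.Bijective φ) : RingHomFlat φ := by
  letI := φ.toAlgebra
  exact Module.Flat.of_linearEquiv
    ((LinearEquiv.ofBijective (Algebra.linearMap R S) h).symm)

lemma flatAtPrimes_isStableUnderBaseChange :
    RingHom.IsStableUnderBaseChange
      (fun {R S : Type u} [CommRing R] [CommRing S] (φ : R →+* S) =>
        ∀ (p : Ideal S) (_ : p.IsPrime),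
          RingHomFlat (Localization.localRingHom (p.comap φ) p φ rfl)) := by
  intro R S R' S' _ _ _ _ _ _ _ _ _ _ _ hpush H q hq
  set p : Ideal S := q.comap (algebraMap S S') with hp_def
  haveI hp : p.IsPrime := Ideal.IsPrime.comap _
  -- Step 1 : `Flat R (Localization.AtPrime p)`
  letI : Algebra (Localization.AtPrime (p.comap (algebraMap R S))) (Localization.AtPrime p) :=
    (Localization.localRingHom (p.comap (algebraMap R S)) p (algebraMap R S) rfl).toAlgebra
  haveI : Module.Flat (Localization.AtPrime (p.comap (algebraMap R S)))
      (Localization.AtPrime p) := H p hp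
  haveI : IsScalarTower R (Localization.AtPrime (p.comap (algebraMap R S)))
      (Localization.AtPrime p) := by
    refine IsScalarTower.of_algebraMap_eq fun r => ?_
    rw [IsScalarTower.algebraMap_apply R S (Localization.AtPrime p)]
    exact (Localization.localRingHom_to_map (p.comap (algebraMap R S)) p
      (algebraMap R S) rfl r).symm
  haveI hRLp : Module.Flat R (Localization.AtPrime p) :=
    Module.Flat.trans R (Localization.AtPrime (p.comap (algebraMap R S))) _
  -- Step 2 : `C` is the localization of `S'` at the image of `p.primeCompl`
  set W : Submonoid S' := Algebra.algebraMapSubmonoid S' p.primeCompl with hW_def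
  set C := Localization W with hC_def
  have hle : p.primeCompl ≤ W.comap (algebraMap S S') :=
    fun x hx => Submonoid.mem_comap.mpr (Submonoid.mem_map_of_mem _ hx)
  letI : Algebra (Localization.AtPrime p) C := (IsLocalization.map (M := p.primeCompl)
    (T := W) C (algebraMap S S') hle).toAlgebra
  haveI : IsScalarTower S (Localization.AtPrime p) C := by
    refine IsScalarTower.of_algebraMap_eq fun s => ?_
    rw [IsScalarTower.algebraMap_apply S S' C]
    exact (IsLocalization.map_eq (S := Localization.AtPrime p) (Q := C) hle s).symm
  haveI hpo1 : Algebra.IsPushout S S' (Localization.AtPrime p) C :=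
    Algebra.isPushout_of_isLocalization p.primeCompl (Localization.AtPrime p) S' C
  -- Step 3 : compose the two base-change squares
  haveI : IsScalarTower R S C := by
    refine IsScalarTower.of_algebraMap_eq fun r => ?_
    rw [IsScalarTower.algebraMap_apply R S' C, IsScalarTower.algebraMap_apply S S' C,
      ← IsScalarTower.algebraMap_apply R S S']
  haveI : IsScalarTower R (Localization.AtPrime p) C := by
    refine IsScalarTower.of_algebraMap_eq fun r => ?_
    rw [IsScalarTower.algebraMap_apply R S (Localization.AtPrime p),
      IsScalarTower.algebraMap_apply R S C,
      IsScalarTower.algebraMap_apply S (Localization.AtPrime p) C]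
  have hcomp := IsBaseChange.comp (hpush.out) (hpo1.symm.out)
  -- Step 4/5 : `C = Lp ⊗[R] R'`, hence `C` is flat over `R'`
  haveI : IsScalarTower R R' C := by
    refine IsScalarTower.of_algebraMap_eq fun r => ?_
    rw [IsScalarTower.algebraMap_apply R S' C, IsScalarTower.algebraMap_apply R R' S',
      IsScalarTower.algebraMap_apply R' S' C]
  haveI hpo2 : Algebra.IsPushout R (Localization.AtPrime p) R' C := by
    constructor
    have heq : (IsScalarTower.toAlgHom R R' C).toLinearMap =
        (((IsScalarTower.toAlgHom S S' C).toLinearMap.restrictScalars R).comp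
          (IsScalarTower.toAlgHom R R' S').toLinearMap) :=
      LinearMap.ext fun x => IsScalarTower.algebraMap_apply R' S' C x
    rw [heq]
    exact hcomp
  haveI hflatC : Module.Flat R' C :=
    Module.Flat.isBaseChange (R := R) (S := R') (M := Localization.AtPrime p) C hpo2.symm.out
  -- Step 6 : `Localization.AtPrime q` is a localization of `C`, hence flat over `R'`
  have hWq : W ≤ q.primeCompl := by
    rintro x ⟨s, hs, rfl⟩
    exact fun hmem => hs hmem
  letI : Algebra C (Localization.AtPrime q) :=
    IsLocalization.localizationAlgebraOfSubmonoidLe C (Localization.AtPrime q)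
      W q.primeCompl hWq
  haveI : IsScalarTower S' C (Localization.AtPrime q) :=
    IsLocalization.localization_isScalarTower_of_submonoid_le C (Localization.AtPrime q)
      W q.primeCompl hWq
  haveI : IsLocalization (q.primeCompl.map (algebraMap S' C)) (Localization.AtPrime q) :=
    IsLocalization.isLocalization_of_submonoid_le C (Localization.AtPrime q) W q.primeCompl hWq
  haveI : Module.Flat C (Localization.AtPrime q) :=
    IsLocalization.flat (Localization.AtPrime q) (q.primeCompl.map (algebraMap S' C))
  haveI : IsScalarTower R' C (Localization.AtPrime q) := by
    refine IsScalarTower.of_algebraMap_eq fun x => ?_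
    rw [IsScalarTower.algebraMap_apply R' S' (Localization.AtPrime q),
      IsScalarTower.algebraMap_apply R' S' C,
      IsScalarTower.algebraMap_apply S' C (Localization.AtPrime q)]
  haveI : Module.Flat R' (Localization.AtPrime q) := Module.Flat.trans R' C _
  -- Step 7 : descend to the localization of `R'` at `q.comap (algebraMap R' S')`
  letI := (Localization.localRingHom (q.comap (algebraMap R' S')) q (algebraMap R' S')
    rfl).toAlgebra
  haveI : IsScalarTower R' (Localization.AtPrime (q.comap (algebraMap R' S')))
      (Localization.AtPrime q) := by
    refine IsScalarTower.of_algebraMap_eq fun r => ?_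
    rw [IsScalarTower.algebraMap_apply R' S' (Localization.AtPrime q)]
    exact (Localization.localRingHom_to_map (q.comap (algebraMap R' S')) q
      (algebraMap R' S') rfl r).symm
  haveI := isLocalizedModule_id (q.comap (algebraMap R' S')).primeCompl
    (Localization.AtPrime q) (Localization.AtPrime (q.comap (algebraMap R' S')))
  exact Module.Flat.of_isLocalizedModule (Localization.AtPrime (q.comap (algebraMap R' S')))
    (q.comap (algebraMap R' S')).primeCompl LinearMap.id

lemma ringHomFlat_respectsIso :
    RingHom.RespectsIso (fun {R S : Type u} [CommRing R] [CommRing S] (φ : R →+* S) =>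
      RingHomFlat φ) := by
  constructor
  · intro R S T _ _ _ f e hf
    exact hf.comp (RingHomFlat.of_bijective e.bijective)
  · intro R S T _ _ _ f e hf
    exact (RingHomFlat.of_bijective e.bijective).comp hf

lemma schemeHomFlat_eq_stalkwise :
    @SchemeHomFlat.{u} = (AlgebraicGeometry.stalkwise
      (fun {R S : Type u} [CommRing R] [CommRing S] (φ : R →+* S) => RingHomFlat φ)) := by
  funext X Y f
  rfl

/-- Flatness of scheme morphisms is stable under base change. -/
lemma SchemeHomFlat.pullback_snd {X Y S : Scheme.{u}} (f : X ⟶ S) (g : Y ⟶ S)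
    (hf : SchemeHomFlat f) : SchemeHomFlat (pullback.snd f g) := by
  haveI := HasRingHomProperty.stalkwise
    (P := fun {R S : Type u} [CommRing R] [CommRing S] (φ : R →+* S) => RingHomFlat φ)
    ringHomFlat_respectsIso
  haveI : (AlgebraicGeometry.stalkwise
      (fun {R S : Type u} [CommRing R] [CommRing S] (φ : R →+* S) =>
        RingHomFlat φ)).IsStableUnderBaseChange :=
    HasRingHomProperty.isStableUnderBaseChange flatAtPrimes_isStableUnderBaseChange
  rw [schemeHomFlat_eq_stalkwise] at hf ⊢
  exact MorphismProperty.pullback_snd _ _ hf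

/-- **Base change for smoothings.**  Let `(Z, R) → (T, t)` be an abstract
smoothing of a finite `k`-scheme `R` (packaged as `sm : AbstractSmoothing (SpecOf k) sR`).
Let `T'` be an irreducible (separated, locally Noetherian) `k`-scheme with a `k`-morphism
`f : T' ⟶ T` such that the generic point `η` of `T` lies in the set-theoretic image of `f`
and such that there is a `k`-rational point `pt'` of `T'` with `pt' ≫ f = pt`.  Then the
base change `Z ×_T T' → T'` is an abstract smoothing of `R` with special point `pt'`:
it is flat and finite, its fibre over `pt'` is identified with `R` as a `k`-scheme, and
its fibre over the generic point of `T'` is smooth. -/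
theorem base_change_of_abstract_smoothing
    {k : Type u} [Field k] {R : Scheme.{u}} (sR : R ⟶ SpecOf k) [IsFinite sR]
    (sm : AbstractSmoothing (SpecOf k) sR)
    (T' : Scheme.{u}) [IrreducibleSpace T'] [IsLocallyNoetherian T']
    (sT' : T' ⟶ SpecOf k) [IsSeparated sT']
    (f : T' ⟶ sm.T) (hf_over : f ≫ sm.sT = sT')
    (hη : ∀ η : sm.T, closure ({η} : Set sm.T) = Set.univ → η ∈ Set.range f.base)
    (pt' : SpecOf k ⟶ T') (hpt' : pt' ≫ f = sm.pt) :
    SchemeHomFlat (pullback.snd sm.π f) ∧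
    IsFinite (pullback.snd sm.π f) ∧
    (∃ e : pullback (pullback.snd sm.π f) pt' ≅ R,
      e.inv ≫ pullback.snd (pullback.snd sm.π f) pt' = sR) ∧
    (∀ η' : T', closure ({η'} : Set T') = Set.univ →
      IsSmooth (pullback.snd (pullback.snd sm.π f) (T'.fromSpecResidueField η'))) := by
  haveI := sm.irr
  refine ⟨SchemeHomFlat.pullback_snd _ _ sm.flat, ?_, ?_, ?_⟩
  · haveI := sm.finite
    exact MorphismProperty.IsStableUnderBaseChange.of_isPullback (IsPullback.of_hasPullback _ _) sm.finite
  · -- the fibre over `pt'`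
    have big := (IsPullback.of_hasPullback (pullback.snd sm.π f) pt').paste_horiz
      (IsPullback.of_hasPullback sm.π f)
    rw [hpt'] at big
    refine ⟨big.isoIsPullback _ _ (IsPullback.of_hasPullback sm.π sm.pt) ≪≫ sm.fiberIso, ?_⟩
    rw [Iso.trans_inv, Category.assoc,
      IsPullback.isoIsPullback_inv_snd _ _ big (IsPullback.of_hasPullback sm.π sm.pt),
      sm.fiberIso_over]
  · -- smoothness of the generic fibre
    intro η' hη'
    have h1 : genericPoint ↑sm.T ∈ closure ({f.base η'} : Set sm.T) := by
      obtain ⟨x, hx⟩ := hη (genericPoint ↑sm.T) (by simpa using genericPoint_closure (α := sm.T))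
      rw [← hx]
      have hx2 : x ∈ closure ({η'} : Set T') := hη' ▸ Set.mem_univ x
      have himg := image_closure_subset_closure_image (f := f.base) f.base.hom.continuous
        (Set.mem_image_of_mem _ hx2)
      simpa [Set.image_singleton] using himg
    have hcl : closure ({f.base η'} : Set sm.T) = Set.univ := by
      apply Set.eq_univ_of_univ_subset
      calc (Set.univ : Set sm.T) = closure {genericPoint ↑sm.T} := by
            simpa using (genericPoint_closure (α := sm.T)).symm
        _ ⊆ closure (closure ({f.base η'} : Set sm.T)) :=
            closure_mono (Set.singleton_subset_iff.mpr h1)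
        _ = closure ({f.base η'} : Set sm.T) := closure_closure
    have hsm := sm.genericSmooth (f.base η') hcl
    have hfac : T'.fromSpecResidueField η' ≫ f =
        Spec.map (f.residueFieldMap η') ≫ sm.T.fromSpecResidueField (f.base η') :=
      (Scheme.Hom.SpecMap_residueFieldMap_fromSpecResidueField f η').symm
    have big1 := (IsPullback.of_hasPullback (pullback.snd sm.π f)
      (T'.fromSpecResidueField η')).paste_horiz (IsPullback.of_hasPullback sm.π f)
    rw [hfac] at big1
    have big2 := (IsPullback.of_hasPullback
        (pullback.snd sm.π (sm.T.fromSpecResidueField (f.base η')))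
        (Spec.map (f.residueFieldMap η'))).paste_horiz
      (IsPullback.of_hasPullback sm.π (sm.T.fromSpecResidueField (f.base η')))
    haveI := isSmooth_isStableUnderBaseChange
    have hs2 : IsSmooth (pullback.snd
        (pullback.snd sm.π (sm.T.fromSpecResidueField (f.base η')))
        (Spec.map (f.residueFieldMap η'))) :=
      MorphismProperty.IsStableUnderBaseChange.of_isPullback (P := @Smooth)
        (IsPullback.of_hasPullback _ _) hsm
    have hsnd : pullback.snd (pullback.snd sm.π f) (T'.fromSpecResidueField η') =
        (big1.isoIsPullback _ _ big2).hom ≫ pullback.snd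
          (pullback.snd sm.π (sm.T.fromSpecResidueField (f.base η')))
          (Spec.map (f.residueFieldMap η')) :=
      (IsPullback.isoIsPullback_hom_snd _ _ big1 big2).symm
    rw [hsnd]
    haveI : MorphismProperty.RespectsIso @Smooth.{u} := MorphismProperty.IsStableUnderBaseChange.respectsIso
    exact (MorphismProperty.cancel_left_of_respectsIso @Smooth _ _).mpr hs2
end
end

section
/- Let X and X' be schemes of finite type over k, and let S ⊆ X and S' ⊆ X' be Zariski-dense subsets consisting of k-rational points (points whose residue field equals k). Then the subset S × S' of X ×_{Spec k} X', consisting of the images of the induced morphisms s ×_k s' : Spec k → X ×_{Spec k} X' for s ∈ S and s' ∈ S', is Zariski-dense in X ×_{Spec k} X'. -/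
open AlgebraicGeometry CategoryTheory CategoryTheory.Limits

noncomputable section

universe u

section AuxAlgCore
open TensorProduct
variable {k A B : Type u} [Field k] [CommRing A] [CommRing B] [Algebra k A] [Algebra k B]

noncomputable def Phi (σ : A →ₐ[k] k) : A ⊗[k] B →ₐ[k] B :=
  Algebra.TensorProduct.productMap ((Algebra.ofId k B).comp σ) (AlgHom.id k B)

lemma Phi_tmul (σ : A →ₐ[k] k) (a : A) (b : B) : Phi σ (a ⊗ₜ b) = σ a • b := by
  simp [Phi, Algebra.smul_def, Algebra.ofId_apply]

lemma Phi_repr (σ : A →ₐ[k] k) (f : A ⊗[k] B) :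
    Phi σ f = Finsupp.linearCombination k ⇑(Module.Basis.ofVectorSpace k B)
      (((Module.Basis.ofVectorSpace k B).baseChange A |>.repr f).mapRange σ (map_zero σ)) := by
  classical
  set bb := Module.Basis.ofVectorSpace k B with hbb
  set bc := bb.baseChange A with hbc
  conv_lhs => rw [← bc.linearCombination_repr f]
  rw [Finsupp.linearCombination_apply, Finsupp.linearCombination_apply,
    Finsupp.sum_mapRange_index (by simp)]
  rw [map_finsuppSum]
  refine Finsupp.sum_congr fun i _ => ?_
  rw [hbc, Module.Basis.baseChange_apply, TensorProduct.smul_tmul', smul_eq_mul, mul_one, Phi_tmul]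

/-- If the image of `f` under every evaluation `Phi σ`, `σ ∈ Sg`, is nilpotent, and the
`σ ∈ Sg` jointly detect non-nilpotency in `A`, then `f` is nilpotent. -/
lemma alg_core (Sg : Set (A →ₐ[k] k))
    (hA : ∀ a : A, (∀ σ ∈ Sg, σ a = 0) → IsNilpotent a)
    (f : A ⊗[k] B)
    (hf : ∀ σ ∈ Sg, IsNilpotent (Phi (B := B) σ f)) :
    IsNilpotent f := by
  classical
  set NA := nilradical A
  set NB := nilradical B
  have hNA : NA.IsRadical := Ideal.radical_isRadical ⊥
  have hNB : NB.IsRadical := Ideal.radical_isRadical ⊥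
  haveI : IsReduced (A ⧸ NA) := Ideal.isRadical_iff_quotient_reduced NA |>.mp hNA
  haveI : IsReduced (B ⧸ NB) := Ideal.isRadical_iff_quotient_reduced NB |>.mp hNB
  set πA : A →ₐ[k] A ⧸ NA := Ideal.Quotient.mkₐ k NA with hπA
  set πB : B →ₐ[k] B ⧸ NB := Ideal.Quotient.mkₐ k NB with hπB
  set q : A ⊗[k] B →ₐ[k] (A ⧸ NA) ⊗[k] (B ⧸ NB) := Algebra.TensorProduct.map πA πB with hq
  suffices hqf : q f = 0 by
    have hker : f ∈ RingHom.ker q := hqf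
    rw [Algebra.TensorProduct.map_ker _ _ (Ideal.Quotient.mkₐ_surjective k NA)
      (Ideal.Quotient.mkₐ_surjective k NB)] at hker
    have hle : (RingHom.ker πA).map
        (Algebra.TensorProduct.includeLeft : A →ₐ[k] A ⊗[k] B) ⊔
        (RingHom.ker πB).map
        (Algebra.TensorProduct.includeRight : B →ₐ[k] A ⊗[k] B) ≤ nilradical (A ⊗[k] B) := by
      apply sup_le <;> rw [Ideal.map_le_iff_le_comap] <;> intro x hx
      · have hx' : IsNilpotent x := by
          simpa [πA, NA, Ideal.Quotient.eq_zero_iff_mem, mem_nilradical] using hx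
        exact mem_nilradical.mpr (hx'.map _)
      · have hx' : IsNilpotent x := by
          simpa [πB, NB, Ideal.Quotient.eq_zero_iff_mem, mem_nilradical] using hx
        exact mem_nilradical.mpr (hx'.map _)
    exact mem_nilradical.mp (hle hker)
  -- descend the evaluations to the reduced quotients
  have hkill : ∀ σ : A →ₐ[k] k, ∀ a ∈ NA, σ a = 0 := by
    intro σ a ha
    have : IsNilpotent (σ a) := (mem_nilradical.mp ha).map σ
    exact this.eq_zero
  set bar : (A →ₐ[k] k) → ((A ⧸ NA) →ₐ[k] k) :=
    fun σ => Ideal.Quotient.liftₐ NA σ (hkill σ) with hbar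
  have hbar_mk : ∀ (σ : A →ₐ[k] k) (a : A), bar σ (πA a) = σ a := by
    intro σ a; simp [hbar, hπA]; exact Ideal.Quotient.lift_mk _ _ _
  -- key commuting square : (Phi (bar σ)) ∘ q = πB ∘ Phi σ
  have hcomm : ∀ σ : A →ₐ[k] k,
      (Phi (B := B ⧸ NB) (bar σ)).comp q = πB.comp (Phi (B := B) σ) := by
    intro σ
    ext x
    · simp [hq, Phi_tmul, hbar_mk]
    · simp [hq, Phi_tmul]
  have hzero : ∀ σ ∈ Sg, Phi (B := B ⧸ NB) (bar σ) (q f) = 0 := by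
    intro σ hσ
    have : Phi (B := B ⧸ NB) (bar σ) (q f) = πB (Phi (B := B) σ f) := by
      have := congrArg (fun g => g f) (hcomm σ); simpa using this
    rw [this]
    exact ((hf σ hσ).map πB).eq_zero
  -- coordinates of `q f`
  set bb := Module.Basis.ofVectorSpace k (B ⧸ NB) with hbb
  set bc := bb.baseChange (A ⧸ NA) with hbc
  have hcoord : ∀ i, bc.repr (q f) i = 0 := by
    intro i
    obtain ⟨a, ha⟩ := Ideal.Quotient.mkₐ_surjective k NA (bc.repr (q f) i)
    have hσa : ∀ σ ∈ Sg, σ a = 0 := by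
      intro σ hσ
      have h0 := hzero σ hσ
      rw [Phi_repr] at h0
      have hli := bb.linearIndependent
      rw [linearIndependent_iff] at hli
      have := hli _ h0
      have hi := DFunLike.congr_fun this i
      rw [← hbar_mk σ a, ha]
      simpa using hi
    have : IsNilpotent a := hA a hσa
    rw [← ha]
    have : IsNilpotent (πA a) := this.map πA
    simpa [hπA] using this.eq_zero
  have hr0 : bc.repr (q f) = 0 := Finsupp.ext fun i => hcoord i
  have := bc.linearCombination_repr (q f)
  rw [hr0, map_zero] at this
  exact this.symm


lemma chart_core (Sg : Set (A →ₐ[k] k))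
    (hA : ∀ a : A, (∀ σ ∈ Sg, σ a = 0) → IsNilpotent a)
    (f : A ⊗[k] B) (hf : ¬ IsNilpotent f) :
    ∃ σ ∈ Sg, ∃ p : PrimeSpectrum (A ⊗[k] B), f ∉ p.asIdeal ∧
      p.asIdeal.comap (Algebra.TensorProduct.includeLeftRingHom (R := k) (A := A) (B := B))
        = RingHom.ker σ := by
  classical
  by_contra hcon
  push_neg at hcon
  -- then for every σ ∈ Sg, `Phi σ f` is nilpotent
  apply hf
  refine alg_core Sg hA f (fun σ hσ => ?_)
  by_contra hnil
  rw [nilpotent_iff_mem_prime] at hnil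
  push_neg at hnil
  obtain ⟨J, hJ, hfJ⟩ := hnil
  haveI := hJ
  set p : PrimeSpectrum (A ⊗[k] B) :=
    ⟨J.comap (Phi (B := B) σ).toRingHom, Ideal.IsPrime.comap _⟩ with hp
  have hfp : f ∉ p.asIdeal := by simpa [hp] using hfJ
  have hcomap : p.asIdeal.comap
      (Algebra.TensorProduct.includeLeftRingHom (R := k) (A := A) (B := B)) = RingHom.ker σ := by
    ext a
    have hval : Phi (B := B) σ (a ⊗ₜ 1) = algebraMap k B (σ a) := by
      rw [Phi_tmul, Algebra.algebraMap_eq_smul_one]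
    constructor
    · intro h
      simp only [Ideal.mem_comap, hp] at h
      -- h : Phi σ (a ⊗ₜ 1) ∈ J
      by_contra ha
      have hne : σ a ≠ 0 := by simpa [RingHom.mem_ker] using ha
      have hunit : IsUnit (algebraMap k B (σ a)) :=
        (IsUnit.map _ (isUnit_iff_ne_zero.mpr hne))
      have : algebraMap k B (σ a) ∈ J := by
        simpa [Algebra.TensorProduct.includeLeftRingHom_apply, hval] using h
      exact hJ.ne_top (J.eq_top_of_isUnit_mem this hunit)
    · intro h
      have h0 : σ a = 0 := by simpa [RingHom.mem_ker] using h
      simp only [Ideal.mem_comap, hp]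
      simp [Algebra.TensorProduct.includeLeftRingHom_apply, hval, h0]
  exact hcon σ hσ p hfp hcomap
end AuxAlgCore

open TensorProduct in
lemma dense_preimage_fst {k : Type u} [Field k] {X X' : Scheme.{u}}
    (sX : X ⟶ SpecOf k) (sX' : X' ⟶ SpecOf k)
    (D : Set X) (hD : Dense D)
    (hrat : ∀ d ∈ D, ∃ s : SpecOf k ⟶ X, s ≫ sX = 𝟙 _ ∧ s.base default = d) :
    Dense ((pullback.fst sX sX').base ⁻¹' D) := by
  rw [dense_iff_inter_open]
  rintro U hU ⟨u, hu⟩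
  obtain ⟨_, ⟨V, hV, rfl⟩, hxV, -⟩ :=
    (Scheme.isBasis_affineOpens X).exists_subset_of_mem_open
      (Set.mem_univ ((pullback.fst sX sX').base u)) isOpen_univ
  replace hV : IsAffineOpen V := hV
  obtain ⟨_, ⟨V', hV', rfl⟩, hxV', -⟩ :=
    (Scheme.isBasis_affineOpens X').exists_subset_of_mem_open
      (Set.mem_univ ((pullback.snd sX sX').base u)) isOpen_univ
  replace hV' : IsAffineOpen V' := hV'
  set A : CommRingCat := X.presheaf.obj (Opposite.op V) with hA
  set B : CommRingCat := X'.presheaf.obj (Opposite.op V') with hB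
  set gA : Spec A ⟶ SpecOf k := hV.fromSpec ≫ sX with hgA0
  set gB : Spec B ⟶ SpecOf k := hV'.fromSpec ≫ sX' with hgB0
  set φA : CommRingCat.of k ⟶ A := Spec.preimage gA with hφA
  set φB : CommRingCat.of k ⟶ B := Spec.preimage gB with hφB
  letI : Algebra k ↑A := φA.hom.toAlgebra
  letI : Algebra k ↑B := φB.hom.toAlgebra
  have hgA : Spec.map (CommRingCat.ofHom (algebraMap k ↑A)) = gA := by
    have : CommRingCat.ofHom (algebraMap k ↑A) = φA := rfl
    rw [this, hφA, Spec.map_preimage]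
  have hgB : Spec.map (CommRingCat.ofHom (algebraMap k ↑B)) = gB := by
    have : CommRingCat.ofHom (algebraMap k ↑B) = φB := rfl
    rw [this, hφB, Spec.map_preimage]
  have e₁ : Spec.map (CommRingCat.ofHom (algebraMap k ↑A)) ≫ 𝟙 (SpecOf k) = hV.fromSpec ≫ sX := by
    rw [Category.comp_id, hgA, hgA0]
  have e₂ : Spec.map (CommRingCat.ofHom (algebraMap k ↑B)) ≫ 𝟙 (SpecOf k) =
      hV'.fromSpec ≫ sX' := by
    rw [Category.comp_id, hgB, hgB0]
  set mE : Spec (.of (↑A ⊗[k] ↑B)) ⟶ pullback sX sX' :=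
    (pullbackSpecIso k ↑A ↑B).inv ≫
      pullback.map _ _ sX sX' hV.fromSpec hV'.fromSpec (𝟙 (SpecOf k)) e₁ e₂ with hmE
  have hsurj : Function.Surjective ((pullbackSpecIso k ↑A ↑B).inv.base) :=
    (Scheme.homeoOfIso (pullbackSpecIso k ↑A ↑B).symm).surjective
  have hrangeE : Set.range mE.base =
      (pullback.fst sX sX').base ⁻¹' (V : Set X) ∩
      (pullback.snd sX sX').base ⁻¹' (V' : Set X') := by
    rw [hmE, Scheme.Hom.comp_base, TopCat.coe_comp, Set.range_comp, hsurj.range_eq, Set.image_univ,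
      Scheme.Pullback.range_map]
    congr 1
    · exact congrArg (fun s => (pullback.fst sX sX').base ⁻¹' s) hV.range_fromSpec
    · exact congrArg (fun s => (pullback.snd sX sX').base ⁻¹' s) hV'.range_fromSpec
  have humem : u ∈ Set.range mE.base := by rw [hrangeE]; exact ⟨hxV, hxV'⟩
  obtain ⟨w, hw⟩ := humem
  set U'' : Set (Spec (.of (↑A ⊗[k] ↑B))) := mE.base ⁻¹' U with hU''
  have hU''open : IsOpen U'' := hU.preimage mE.continuous
  have hwU : w ∈ U'' := by rw [hU'']; simpa [hw] using hu
  obtain ⟨_, ⟨f, rfl⟩, hwf, hfsub⟩ :=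
    (PrimeSpectrum.isTopologicalBasis_basic_opens (R := ↑A ⊗[k] ↑B)).exists_subset_of_mem_open
      hwU hU''open
  have hfnil : ¬ IsNilpotent f := by
    intro h
    have hwf' : f ∉ w.asIdeal := hwf
    exact hwf' (nilpotent_iff_mem_prime.mp h _ w.isPrime)
  set Sg : Set (↑A →ₐ[k] k) :=
    {σ | hV.fromSpec.base (PrimeSpectrum.comap (σ : ↑A →+* k) default) ∈ D} with hSg
  have hAdense : ∀ a : ↑A, (∀ σ ∈ Sg, σ a = 0) → IsNilpotent a := by
    intro a ha
    by_contra hnil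
    have hne : (PrimeSpectrum.basicOpen a : Set (PrimeSpectrum ↑A)).Nonempty := by
      rcases Set.eq_empty_or_nonempty (PrimeSpectrum.basicOpen a : Set (PrimeSpectrum ↑A)) with he | hne
      · exact absurd ((PrimeSpectrum.basicOpen_eq_bot_iff a).mp
          (TopologicalSpace.Opens.ext he)) hnil
      · exact hne
    have hopen : IsOpen (hV.fromSpec.base '' (PrimeSpectrum.basicOpen a : Set (PrimeSpectrum ↑A))) :=
      hV.fromSpec.isOpenEmbedding.isOpenMap _ (PrimeSpectrum.basicOpen a).2
    obtain ⟨d, hd1, hd2⟩ := hD.inter_open_nonempty _ hopen (hne.image _)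
    obtain ⟨q0, hq0, hq0d⟩ := hd1
    obtain ⟨s, hs1, hs2⟩ := hrat d hd2
    have hsub : Set.range s.base ⊆ Set.range hV.fromSpec.base := by
      rintro t ⟨y, rfl⟩
      have : y = default := Subsingleton.elim _ _
      rw [this, hs2]
      exact ⟨q0, hq0d⟩
    set sV : SpecOf k ⟶ Spec A := IsOpenImmersion.lift hV.fromSpec s hsub with hsV
    have hfac : sV ≫ hV.fromSpec = s := IsOpenImmersion.lift_fac _ _ hsub
    set σ' : A ⟶ CommRingCat.of k := Spec.preimage sV with hσ'
    have hspecσ : Spec.map σ' = sV := Spec.map_preimage sV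
    have hcompσ : φA ≫ σ' = 𝟙 (CommRingCat.of k) := by
      apply Spec.map_injective
      rw [Spec.map_comp, hspecσ, hφA, Spec.map_preimage, Spec.map_id, hgA0, ← Category.assoc,
        hfac, hs1]
    set σ : ↑A →ₐ[k] k :=
      { toRingHom := σ'.hom,
        commutes' := fun r => by
          have := DFunLike.congr_fun (congrArg CommRingCat.Hom.hom hcompσ) r
          exact this } with hσdef
    have hptV : sV.base (default : Spec (CommRingCat.of k)) = q0 := by
      apply hV.fromSpec.isOpenEmbedding.injective
      have : (sV ≫ hV.fromSpec).base default = s.base default := by rw [hfac]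
      rw [Scheme.Hom.comp_apply] at this
      rw [this, hs2, hq0d]
    have hσSg : σ ∈ Sg := by
      rw [hSg]
      have hch : PrimeSpectrum.comap (σ : ↑A →+* k) default
          = sV.base (default : Spec (CommRingCat.of k)) := by
        rw [← hspecσ]; exact congrArg (PrimeSpectrum.comap (σ : ↑A →+* k)) (Subsingleton.elim _ _)
      show hV.fromSpec.base (PrimeSpectrum.comap (σ : ↑A →+* k) default) ∈ D
      rw [hch, hptV, hq0d]
      exact hd2
    have h0 : σ a = 0 := ha σ hσSg
    have : a ∉ q0.asIdeal := hq0
    apply this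
    have hq0eq : q0 = PrimeSpectrum.comap (σ : ↑A →+* k) default := by
      rw [← hptV, ← hspecσ]; exact (congrArg (PrimeSpectrum.comap (σ : ↑A →+* k)) (Subsingleton.elim _ _)).symm
    rw [hq0eq]
    show σ' a ∈ (default : PrimeSpectrum k).asIdeal
    have : σ' a = 0 := h0
    rw [this]
    exact Ideal.zero_mem _
  obtain ⟨σ, hσSg, p, hfp, hcomap⟩ := chart_core Sg hAdense f hfnil
  refine ⟨mE.base p, ?_, ?_⟩
  · apply hfsub
    show f ∉ p.asIdeal
    exact hfp
  · show (pullback.fst sX sX').base (mE.base p) ∈ D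
    have hfstm : mE ≫ pullback.fst sX sX' =
        Spec.map (CommRingCat.ofHom
          (Algebra.TensorProduct.includeLeftRingHom (R := k) (A := ↑A) (B := ↑B)))
          ≫ hV.fromSpec := by
      rw [hmE, Category.assoc, pullback.lift_fst, ← Category.assoc, pullbackSpecIso_inv_fst]
    have : (pullback.fst sX sX').base (mE.base p) =
        hV.fromSpec.base (PrimeSpectrum.comap
          (Algebra.TensorProduct.includeLeftRingHom (R := k) (A := ↑A) (B := ↑B)) p) := by
      show (mE ≫ pullback.fst sX sX').base p = _
      rw [hfstm]
      rfl
    rw [this]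
    have hpt : PrimeSpectrum.comap
        (Algebra.TensorProduct.includeLeftRingHom (R := k) (A := ↑A) (B := ↑B)) p
        = PrimeSpectrum.comap (σ : ↑A →+* k) (default : PrimeSpectrum k) := by
      apply PrimeSpectrum.ext
      rw [PrimeSpectrum.comap_asIdeal, PrimeSpectrum.comap_asIdeal, hcomap]
      have : (default : PrimeSpectrum k).asIdeal = ⊥ := Ideal.eq_bot_of_prime _
      rw [this]
      rfl
    rw [hpt]
    exact hσSg

/-- Let `X` and `X'` be schemes of finite type over `k`, and let
`S` and `S'` be families of `k`-rational points of `X` resp. `X'` (encoded as sections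
of the structure morphisms) whose underlying sets of points are Zariski-dense in `X`
resp. `X'`.  Then the set of points of `X ×_{Spec k} X'` of the form `s ×_k s'` for
`s ∈ S`, `s' ∈ S'` is Zariski-dense in `X ×_{Spec k} X'`. -/
theorem dense_product_of_dense_rational_points
    {k : Type u} [Field k] {X X' : Scheme.{u}}
    (sX : X ⟶ SpecOf k) (sX' : X' ⟶ SpecOf k)
    [LocallyOfFiniteType sX] [QuasiCompact sX]
    [LocallyOfFiniteType sX'] [QuasiCompact sX']
    (S : Set {p : SpecOf k ⟶ X // p ≫ sX = 𝟙 (SpecOf k)})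
    (S' : Set {p : SpecOf k ⟶ X' // p ≫ sX' = 𝟙 (SpecOf k)})
    (hS : Dense (⋃ p ∈ S, Set.range (p : {p : SpecOf k ⟶ X // p ≫ sX = 𝟙 (SpecOf k)}).1.base))
    (hS' : Dense (⋃ p ∈ S', Set.range
      (p : {p : SpecOf k ⟶ X' // p ≫ sX' = 𝟙 (SpecOf k)}).1.base)) :
    Dense (⋃ p ∈ S, ⋃ p' ∈ S',
      Set.range (pullback.lift p.1 p'.1
        (by rw [p.2, p'.2]) : SpecOf k ⟶ pullback sX sX').base) := by
  rw [← dense_closure]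
  set D : Set X := ⋃ p ∈ S, Set.range
      (p : {p : SpecOf k ⟶ X // p ≫ sX = 𝟙 (SpecOf k)}).1.base with hD
  have hrat : ∀ d ∈ D, ∃ s : SpecOf k ⟶ X, s ≫ sX = 𝟙 _ ∧ s.base default = d := by
    rintro d hd
    rw [hD] at hd
    simp only [Set.mem_iUnion] at hd
    obtain ⟨s, hsS, y, hy⟩ := hd
    exact ⟨s.1, s.2, by rwa [Subsingleton.elim (default : SpecOf k) y]⟩
  have key : Dense ((pullback.fst sX sX').base ⁻¹' D) := dense_preimage_fst sX sX' D hS hrat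
  refine key.mono ?_
  intro z hz
  simp only [Set.mem_preimage, hD, Set.mem_iUnion] at hz
  obtain ⟨s, hsS, y, hy⟩ := hz
  -- the slice through `s`
  have e₁ : 𝟙 (SpecOf k) ≫ 𝟙 (SpecOf k) = s.1 ≫ sX := by rw [s.2, Category.comp_id]
  have e₂ : sX' ≫ 𝟙 (SpecOf k) = 𝟙 X' ≫ sX' := by simp
  set ms : pullback (𝟙 (SpecOf k)) sX' ⟶ pullback sX sX' :=
    pullback.map (𝟙 (SpecOf k)) sX' sX sX' s.1 (𝟙 X') (𝟙 (SpecOf k)) e₁ e₂ with hms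
  have hzrange : z ∈ Set.range ms.base := by
    rw [hms, Scheme.Pullback.range_map]
    exact ⟨⟨y, hy⟩, by simp⟩
  obtain ⟨q, hq⟩ := hzrange
  set e : pullback (𝟙 (SpecOf k)) sX' ≅ X' := asIso (pullback.snd (𝟙 (SpecOf k)) sX') with he
  set DQ := e.inv.base '' (⋃ p ∈ S', Set.range
    (p : {p : SpecOf k ⟶ X' // p ≫ sX' = 𝟙 (SpecOf k)}).1.base) with hDQ
  have hDQdense : Dense DQ := by
    rw [hDQ]
    have h1 := (Scheme.homeoOfIso e.symm).image_closure (⋃ p ∈ S', Set.range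
      (p : {p : SpecOf k ⟶ X' // p ≫ sX' = 𝟙 (SpecOf k)}).1.base)
    rw [dense_iff_closure_eq]
    have hcoe : ⇑(Scheme.homeoOfIso e.symm) = ⇑e.inv.base := rfl
    rw [← hcoe, ← h1, hS'.closure_eq, Set.image_univ,
      (Scheme.homeoOfIso e.symm).surjective.range_eq]
  have hmaps : Set.MapsTo ms.base DQ (⋃ p ∈ S, ⋃ p' ∈ S',
      Set.range (pullback.lift p.1 p'.1
        (by rw [p.2, p'.2]) : SpecOf k ⟶ pullback sX sX').base) := by
    rintro _ ⟨t, ht, rfl⟩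
    simp only [Set.mem_iUnion] at ht
    obtain ⟨s', hs'S, y', hy'⟩ := ht
    set ql : SpecOf k ⟶ pullback (𝟙 (SpecOf k)) sX' :=
      pullback.lift (𝟙 (SpecOf k)) s'.1 (by rw [s'.2, Category.id_comp]) with hql
    have h1 : ql ≫ e.hom = s'.1 := by
      rw [hql, he]
      simp
      exact pullback.lift_snd _ _ _
    have h2 : s'.1 ≫ e.inv = ql := by rw [← h1, Category.assoc, e.hom_inv_id, Category.comp_id]
    have h3 : ql ≫ ms = pullback.lift s.1 s'.1 (by rw [s.2, s'.2]) := by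
      apply pullback.hom_ext
      · rw [Category.assoc, hms, pullback.lift_fst, ← Category.assoc, hql, pullback.lift_fst,
          pullback.lift_fst, Category.id_comp]
      · rw [Category.assoc, hms, pullback.lift_snd, ← Category.assoc, hql, pullback.lift_snd,
          pullback.lift_snd, Category.comp_id]
    have hpt : ms.base (e.inv.base t) = (pullback.lift s.1 s'.1
        (by rw [s.2, s'.2]) : SpecOf k ⟶ pullback sX sX').base y' := by
      rw [← hy', ← Scheme.Hom.comp_apply, ← Scheme.Hom.comp_apply, ← Category.assoc, h2, h3]
    rw [hpt]
    simp only [Set.mem_iUnion]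
    exact ⟨s, hsS, s', hs'S, y', rfl⟩
  rw [← hq]
  exact map_mem_closure ms.continuous (hDQdense q) hmaps
end
end
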